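/- Under the hypotheses of the main theorem, for A_{ii} ∈ 𝔄_{ii} and B_{ij} ∈ 𝔄_{ij} with i ≠ j, φ(A_{ii}B_{ij}) = φ(A_{ii})φ(B_{ij}). -/

import Mathlib

/-- The *-Jordan product `{A,B}_* = AB + BA*`. -/
def jstar {R : Type*} [Ring R] [StarRing R] (A B : R) : R := A * B + B * star A

/-- The iterated *-Jordan product `q_{n*}(x_1, ..., x_n)`. -/
def qstar {R : Type*} [Ring R] [StarRing R] : List R → R
  | [] => 0
  | x :: xs => xs.foldl jstar x

lemma corner_left' {R : Type*} [Ring R] {P Q A : R} (hP : P * P = P) (hA : P * A * Q = A) :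
    P * A = A := by
  conv_lhs => rw [← hA]
  simp only [← mul_assoc]
  rw [hP, hA]

lemma corner_right' {R : Type*} [Ring R] {P Q A : R} (hQ : Q * Q = Q) (hA : P * A * Q = A) :
    A * Q = A := by
  conv_lhs => rw [← hA]
  simp only [mul_assoc]
  rw [hQ, ← mul_assoc, hA]

lemma foldl_jstar_replicate {R : Type*} [Ring R] [StarRing R] {P : R}
    (hP : P * P = P) (hPs : star P = P) :
    ∀ (k c : ℕ), List.foldl jstar (c • P) (List.replicate k P) = (c * 2 ^ k) • P := by
  intro k
  induction k with
  | zero => intro c; simp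
  | succ k ih =>
    intro c
    rw [List.replicate_succ, List.foldl_cons]
    have : jstar (c • P) P = (c * 2) • P := by
      simp only [jstar, smul_mul_assoc, star_nsmul, hPs, mul_smul_comm, hP]
      rw [← add_nsmul]; ring_nf
    rw [this, ih (c * 2)]
    ring_nf

lemma qcalc {R : Type*} [Ring R] [StarRing R] (m : ℕ) (P A B : R)
    (hP : P * P = P) (hPs : star P = P) (hPA : P * A = A) (hAP : A * P = A)
    (hBA : B * star A = 0) :
    qstar (List.replicate m P ++ [A, B]) = (2 ^ m : ℕ) • (A * B) := by
  cases m with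
  | zero => simp [qstar, jstar, hBA]
  | succ k =>
    rw [List.replicate_succ, List.cons_append]
    show List.foldl jstar P (List.replicate k P ++ [A, B]) = _
    rw [List.foldl_append]
    have h1 := foldl_jstar_replicate hP hPs k 1
    rw [one_smul, one_mul] at h1
    rw [h1]
    have h2 : jstar ((2 ^ k : ℕ) • P) A = (2 ^ (k + 1) : ℕ) • A := by
      simp only [jstar, smul_mul_assoc, star_nsmul, hPs, hPA, mul_smul_comm, hAP]
      rw [← add_nsmul]; ring_nf
    simp only [List.foldl_cons, List.foldl_nil, h2]
    simp only [jstar, smul_mul_assoc, star_nsmul, mul_smul_comm, hBA]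
    simp

theorem stmt13 {𝔄 𝔄' : Type*} [CStarAlgebra 𝔄] [CStarAlgebra 𝔄']
    (n : ℕ) (hn : 2 ≤ n)
    (P₁ : 𝔄) (hproj : P₁ * P₁ = P₁) (hsa : star P₁ = P₁) (hne0 : P₁ ≠ 0) (hne1 : P₁ ≠ 1)
    (φ : 𝔄 → 𝔄') (hbij : Function.Bijective φ) (hunital : φ 1 = 1) (hadd : ∀ A B : 𝔄, φ (A + B) = φ A + φ B) (hstar : ∀ A : 𝔄, φ (star A) = star (φ A))
    (hpeirce : ∀ Pi ∈ ({P₁, 1 - P₁} : Set 𝔄), ∀ Pj ∈ ({P₁, 1 - P₁} : Set 𝔄), ∀ X : 𝔄,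
      Pi * X * Pj = X → φ Pi * φ X * φ Pj = φ X)
    (hqI : ∀ A B : 𝔄, φ (qstar (List.replicate (n - 2) 1 ++ [A, B])) =
      qstar (List.replicate (n - 2) (φ 1) ++ [φ A, φ B]))
    (hqP : ∀ P ∈ ({P₁, 1 - P₁} : Set 𝔄), ∀ A B : 𝔄,
      φ (qstar (List.replicate (n - 2) P ++ [A, B])) =
      qstar (List.replicate (n - 2) (φ P) ++ [φ A, φ B])) :
    ∀ Pi ∈ ({P₁, 1 - P₁} : Set 𝔄), ∀ Pj ∈ ({P₁, 1 - P₁} : Set 𝔄), Pi ≠ Pj →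
      ∀ A B : 𝔄, Pi * A * Pi = A → Pi * B * Pj = B →
      φ (A * B) = φ A * φ B := by
  intro Pi hPi Pj hPj hne A B hA hB
  -- φ is additive: φ 0 = 0 and φ commutes with nsmul
  have h0 : φ 0 = 0 := by
    have := hadd 0 0
    rw [add_zero] at this
    exact left_eq_add.mp this
  have hsmul : ∀ (k : ℕ) (x : 𝔄), φ (k • x) = k • φ x := by
    intro k x
    induction k with
    | zero => simpa using h0
    | succ k ih => rw [succ_nsmul, hadd, ih, succ_nsmul]
  -- projection facts for Pi, Pj
  have hP1' : (1 - P₁) * (1 - P₁) = 1 - P₁ := by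
    rw [mul_sub, sub_mul, sub_mul, hproj]; noncomm_ring
  have hPs1' : star (1 - P₁ : 𝔄) = 1 - P₁ := by simp [star_sub, hsa]
  obtain ⟨hPPi, hPsi, hPPj, hsum, hji⟩ :
      Pi * Pi = Pi ∧ star Pi = Pi ∧ Pj * Pj = Pj ∧ Pi + Pj = 1 ∧ Pj * Pi = 0 := by
    simp only [Set.mem_insert_iff, Set.mem_singleton_iff] at hPi hPj
    rcases hPi with rfl | rfl <;> rcases hPj with rfl | rfl
    · exact absurd rfl hne
    · refine ⟨hproj, hsa, hP1', by abel, ?_⟩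
      rw [sub_mul, hproj, one_mul, sub_self]
    · refine ⟨hP1', hPs1', hproj, by abel, ?_⟩
      rw [mul_sub, hproj, mul_one, sub_self]
    · exact absurd rfl hne
  have hPi' : Pi ∈ ({P₁, 1 - P₁} : Set 𝔄) := hPi
  have hPj' : Pj ∈ ({P₁, 1 - P₁} : Set 𝔄) := hPj
  -- corner facts in 𝔄
  have hPiA : Pi * A = A := corner_left' hPPi hA
  have hAPi : A * Pi = A := corner_right' hPPi hA
  have hsA : Pi * star A * Pi = star A := by
    conv_rhs => rw [← hA]
    rw [star_mul, star_mul, hPsi, mul_assoc]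
  have hBA : B * star A = 0 := by
    have hBPj : B * Pj = B := corner_right' hPPj hB
    have hPisA : Pi * star A = star A := corner_left' hPPi hsA
    calc B * star A = (B * Pj) * (Pi * star A) := by rw [hBPj, hPisA]
      _ = B * (Pj * Pi * star A) := by simp only [mul_assoc]
      _ = 0 := by rw [hji, zero_mul, mul_zero]
  -- Q facts in 𝔄'
  set Qi := φ Pi with hQi
  set Qj := φ Pj with hQj
  have hQsum : Qi + Qj = 1 := by rw [hQi, hQj, ← hadd, hsum, hunital]
  have hQi3 : Qi * Qi * Qi = Qi := hpeirce Pi hPi' Pi hPi' Pi (by rw [hPPi, hPPi])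
  have hQj3 : Qj * Qj * Qj = Qj := hpeirce Pj hPj' Pj hPj' Pj (by rw [hPPj, hPPj])
  have hQjeq : Qj = 1 - Qi := by rw [← hQsum]; abel
  have hQQ : Qi * Qi = Qi := by
    rw [hQjeq] at hQj3
    have expand : (1 - Qi) * (1 - Qi) * (1 - Qi) =
        1 - Qi - Qi - Qi + (Qi * Qi + Qi * Qi + Qi * Qi) - Qi * Qi * Qi := by noncomm_ring
    rw [expand, hQi3] at hQj3
    have h5 : (Qi * Qi + Qi * Qi + Qi * Qi) - (Qi + Qi + Qi) =
        (1 - Qi - Qi - Qi + (Qi * Qi + Qi * Qi + Qi * Qi) - Qi) - (1 - Qi) := by abel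
    rw [hQj3, sub_self] at h5
    have h3 : Qi * Qi + Qi * Qi + Qi * Qi = Qi + Qi + Qi := sub_eq_zero.mp h5
    have h6 : ((3 : ℕ) : ℂ) • (Qi * Qi) = ((3 : ℕ) : ℂ) • Qi := by
      rw [Nat.cast_smul_eq_nsmul, Nat.cast_smul_eq_nsmul]
      calc (3 : ℕ) • (Qi * Qi) = Qi * Qi + Qi * Qi + Qi * Qi := by abel
        _ = Qi + Qi + Qi := h3
        _ = (3 : ℕ) • Qi := by abel
    exact smul_right_injective 𝔄' (by norm_num : ((3 : ℕ) : ℂ) ≠ 0) h6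
  have hQjQj : Qj * Qj = Qj := by
    rw [hQjeq]
    have : (1 - Qi) * (1 - Qi) = 1 - Qi - Qi + Qi * Qi := by noncomm_ring
    rw [this, hQQ]; abel
  have hQjQi : Qj * Qi = 0 := by rw [hQjeq, sub_mul, one_mul, hQQ, sub_self]
  have hQs : star Qi = Qi := by rw [hQi, ← hstar, hPsi]
  -- corner facts in 𝔄'
  have hQA : Qi * φ A * Qi = φ A := hpeirce Pi hPi' Pi hPi' A hA
  have hQB : Qi * φ B * Qj = φ B := hpeirce Pi hPi' Pj hPj' B hB
  have hQiA : Qi * φ A = φ A := corner_left' hQQ hQA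
  have hAQi : φ A * Qi = φ A := corner_right' hQQ hQA
  have hQsA : Qi * φ (star A) * Qi = φ (star A) := hpeirce Pi hPi' Pi hPi' (star A) hsA
  have hBA' : φ B * star (φ A) = 0 := by
    have hBQj : φ B * Qj = φ B := corner_right' hQjQj hQB
    have hQisA : Qi * star (φ A) = star (φ A) := by
      rw [← hstar]; exact corner_left' hQQ hQsA
    calc φ B * star (φ A) = (φ B * Qj) * (Qi * star (φ A)) := by rw [hBQj, hQisA]
      _ = φ B * (Qj * Qi * star (φ A)) := by simp only [mul_assoc]
      _ = 0 := by rw [hQjQi, zero_mul, mul_zero]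
  -- the q-identity
  have key := hqP Pi hPi' A B
  rw [qcalc (n - 2) Pi A B hPPi hPsi hPiA hAPi hBA, hsmul,
      qcalc (n - 2) Qi (φ A) (φ B) hQQ hQs hQiA hAQi hBA'] at key
  have key' : ((2 ^ (n - 2) : ℕ) : ℂ) • φ (A * B) = ((2 ^ (n - 2) : ℕ) : ℂ) • (φ A * φ B) := by
    rw [Nat.cast_smul_eq_nsmul, Nat.cast_smul_eq_nsmul]; exact key
  exact smul_right_injective 𝔄' (Nat.cast_ne_zero.mpr (by positivity) : ((2 ^ (n - 2) : ℕ) : ℂ) ≠ 0) key'
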